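/- Let S be a semidomain. Then S is a bounded factorization semidomain if and only if S[x^{±1}] is a bounded factorization semidomain. -/

import Mathlib

open Polynomial

/-- A witness that the commutative semiring `S` embeds into an integral domain. -/
structure SemidomainWitness (S : Type) [CommSemiring S] : Type 1 where
  R : Type
  [commRing : CommRing R]
  [isDomain : IsDomain R]
  f : S →+* R
  inj : Function.Injective f

/-- A semidomain is a commutative semiring that embeds into an integral domain. -/
def IsSemidomain (S : Type) [CommSemiring S] : Prop :=
  Nonempty (SemidomainWitness S)


/-- A commutative monoid with zero is a bounded factorization monoid iff it admits a length
function on its nonzero elements: `ℓ` vanishes exactly on units and is superadditive on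
products. -/
def IsBFS (M : Type) [CommMonoidWithZero M] : Prop :=
  ∃ ℓ : M → ℕ, (∀ a : M, a ≠ 0 → (ℓ a = 0 ↔ IsUnit a)) ∧
    ∀ a b : M, a ≠ 0 → b ≠ 0 → ℓ a + ℓ b ≤ ℓ (a * b)

section Aux

variable {S : Type} [CommSemiring S]

/-- The "length" of a polynomial: length of the leading coefficient plus the width. -/
noncomputable def polyLen (ℓ : S → ℕ) (p : S[X]) : ℕ :=
  ℓ p.leadingCoeff + (p.natDegree - p.natTrailingDegree)

lemma polyLen_mul_X_pow [Nontrivial S] [NoZeroDivisors S] (ℓ : S → ℕ) {p : S[X]}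
    (hp : p ≠ 0) (m : ℕ) : polyLen ℓ (p * X ^ m) = polyLen ℓ p := by
  have hX : (X : S[X]) ^ m ≠ 0 := pow_ne_zero _ X_ne_zero
  have hd : (p * X ^ m).natDegree = p.natDegree + m := natDegree_mul_X_pow _ hp
  have ht : (p * X ^ m).natTrailingDegree = p.natTrailingDegree + m := by
    rw [natTrailingDegree_mul hp hX, natTrailingDegree_X_pow]
  have hle := p.natTrailingDegree_le_natDegree
  rw [polyLen, polyLen, leadingCoeff_mul_X_pow, hd, ht]
  omega

/-- Well-definedness: any two polynomial representatives of a nonzero Laurent polynomial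
have the same `polyLen`. -/
lemma polyLen_well_defined [Nontrivial S] [NoZeroDivisors S] (ℓ : S → ℕ)
    {f : LaurentPolynomial S} (hf : f ≠ 0) {n m : ℕ} {p q : S[X]}
    (hp : p.toLaurent = f * LaurentPolynomial.T n)
    (hq : q.toLaurent = f * LaurentPolynomial.T m) :
    polyLen ℓ p = polyLen ℓ q := by
  have hp0 : p ≠ 0 := by
    intro h
    rw [h, map_zero] at hp
    have := congrArg (· * LaurentPolynomial.T (-(n : ℤ))) hp.symm
    simp only [LaurentPolynomial.mul_T_assoc, add_neg_cancel, LaurentPolynomial.T_zero,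
      mul_one, zero_mul] at this
    exact hf this
  have hq0 : q ≠ 0 := by
    intro h
    rw [h, map_zero] at hq
    have := congrArg (· * LaurentPolynomial.T (-(m : ℤ))) hq.symm
    simp only [LaurentPolynomial.mul_T_assoc, add_neg_cancel, LaurentPolynomial.T_zero,
      mul_one, zero_mul] at this
    exact hf this
  have key : p * X ^ m = q * X ^ n := by
    apply Polynomial.toLaurent_injective
    rw [map_mul, map_mul, Polynomial.toLaurent_X_pow, Polynomial.toLaurent_X_pow, hp, hq,
      LaurentPolynomial.mul_T_assoc, LaurentPolynomial.mul_T_assoc, add_comm]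
  calc polyLen ℓ p = polyLen ℓ (p * X ^ m) := (polyLen_mul_X_pow ℓ hp0 m).symm
    _ = polyLen ℓ (q * X ^ n) := by rw [key]
    _ = polyLen ℓ q := polyLen_mul_X_pow ℓ hq0 n

end Aux

/-- For a semidomain `S`: `S` is a bounded factorization semidomain if and only if the Laurent
polynomial semidomain `S[x^{±1}]` is a bounded factorization semidomain. -/
theorem stmt13 (S : Type) [CommSemiring S] (hS : IsSemidomain S) :
    IsBFS S ↔ IsBFS (LaurentPolynomial S) := by
  classical
  obtain ⟨W⟩ := hS
  letI : CommRing W.R := W.commRing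
  letI : IsDomain W.R := W.isDomain
  haveI : NoZeroDivisors S := by
    constructor
    intro a b hab
    have : W.f a * W.f b = 0 := by rw [← map_mul, hab, map_zero]
    rcases mul_eq_zero.mp this with h | h
    · exact Or.inl (W.inj (by rw [h, map_zero]))
    · exact Or.inr (W.inj (by rw [h, map_zero]))
  haveI : Nontrivial S := by
    refine ⟨0, 1, fun h => ?_⟩
    have : (0 : W.R) = 1 := by rw [← map_zero W.f, ← map_one W.f, h]
    exact zero_ne_one this
  constructor
  · -- forward direction
    rintro ⟨ℓ, h1, h2⟩
    -- representative data
    have rep : ∀ f : LaurentPolynomial S,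
        ∃ (n : ℕ) (p : S[X]), p.toLaurent = f * LaurentPolynomial.T n :=
      LaurentPolynomial.exists_T_pow
    set L : LaurentPolynomial S → ℕ := fun f =>
      polyLen ℓ (rep f).choose_spec.choose with hL
    have hLspec : ∀ f : LaurentPolynomial S,
        ((rep f).choose_spec.choose).toLaurent = f * LaurentPolynomial.T (rep f).choose :=
      fun f => (rep f).choose_spec.choose_spec
    have hLrep : ∀ (f : LaurentPolynomial S), f ≠ 0 → ∀ (n : ℕ) (p : S[X]),
        p.toLaurent = f * LaurentPolynomial.T n → L f = polyLen ℓ p := by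
      intro f hf n p hp
      exact polyLen_well_defined ℓ hf (hLspec f) hp
    have hrep_ne : ∀ (f : LaurentPolynomial S) (n : ℕ) (p : S[X]),
        p.toLaurent = f * LaurentPolynomial.T n → f ≠ 0 → p ≠ 0 := by
      intro f n p hp hf h0
      rw [h0, map_zero] at hp
      have := congrArg (· * LaurentPolynomial.T (-(n : ℤ))) hp.symm
      simp only [LaurentPolynomial.mul_T_assoc, add_neg_cancel, LaurentPolynomial.T_zero,
        mul_one, zero_mul] at this
      exact hf this
    -- superadditivity of L
    have hsuper : ∀ f g : LaurentPolynomial S, f ≠ 0 → g ≠ 0 → L f + L g ≤ L (f * g) := by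
      intro f g hf hg
      obtain ⟨n, p, hp⟩ := rep f
      obtain ⟨m, q, hq⟩ := rep g
      have hp0 : p ≠ 0 := hrep_ne f n p hp hf
      have hq0 : q ≠ 0 := hrep_ne g m q hq hg
      have hfg : f * g ≠ 0 := mul_ne_zero hf hg
      have hpq : (p * q).toLaurent = (f * g) * LaurentPolynomial.T (n + m) := by
        rw [map_mul, hp, hq, mul_mul_mul_comm, ← LaurentPolynomial.T_add]
      rw [hLrep f hf n p hp, hLrep g hg m q hq, hLrep (f * g) hfg (n + m) (p * q) hpq]
      have hlcp : p.leadingCoeff ≠ 0 := leadingCoeff_ne_zero.mpr hp0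
      have hlcq : q.leadingCoeff ≠ 0 := leadingCoeff_ne_zero.mpr hq0
      have hd : (p * q).natDegree = p.natDegree + q.natDegree := natDegree_mul hp0 hq0
      have ht : (p * q).natTrailingDegree = p.natTrailingDegree + q.natTrailingDegree :=
        natTrailingDegree_mul hp0 hq0
      have hlep := p.natTrailingDegree_le_natDegree
      have hleq := q.natTrailingDegree_le_natDegree
      have hlc : ℓ p.leadingCoeff + ℓ q.leadingCoeff ≤ ℓ (p * q).leadingCoeff := by
        rw [leadingCoeff_mul]
        exact h2 _ _ hlcp hlcq
      simp only [polyLen, hd, ht]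
      have : p.natDegree - p.natTrailingDegree + (q.natDegree - q.natTrailingDegree)
          = p.natDegree + q.natDegree - (p.natTrailingDegree + q.natTrailingDegree) := by omega
      omega
    have hone : L 1 = 0 := by
      have h1rep : (1 : S[X]).toLaurent = 1 * LaurentPolynomial.T 0 := by
        simp [LaurentPolynomial.T_zero]
      rw [hLrep 1 one_ne_zero 0 1 h1rep]
      simp only [polyLen, leadingCoeff_one, natDegree_one, natTrailingDegree_one]
      simpa using (h1 1 one_ne_zero).mpr isUnit_one
    refine ⟨L, fun f hf => ?_, hsuper⟩
    constructor
    · intro h0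
      obtain ⟨n, p, hp⟩ := rep f
      have hp0 : p ≠ 0 := hrep_ne f n p hp hf
      rw [hLrep f hf n p hp] at h0
      have hlc0 : ℓ p.leadingCoeff = 0 := by
        simp only [polyLen] at h0; omega
      have hdeq : p.natDegree = p.natTrailingDegree := by
        have := p.natTrailingDegree_le_natDegree
        simp only [polyLen] at h0; omega
      have hlcu : IsUnit p.leadingCoeff :=
        (h1 p.leadingCoeff (leadingCoeff_ne_zero.mpr hp0)).mp hlc0
      -- p = C (leadingCoeff p) * X ^ natDegree p
      have hpC : p = Polynomial.C p.leadingCoeff * X ^ p.natDegree := by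
        ext i
        rw [coeff_C_mul, coeff_X_pow]
        rcases lt_trichotomy i p.natDegree with h | h | h
        · rw [if_neg h.ne, coeff_eq_zero_of_lt_natTrailingDegree (hdeq ▸ h), mul_zero]
        · rw [h, if_pos rfl, mul_one]; rfl
        · rw [if_neg h.ne', coeff_eq_zero_of_natDegree_lt h, mul_zero]
      -- f = toLaurent p * T (-n)
      have hfval : f = p.toLaurent * LaurentPolynomial.T (-(n : ℤ)) := by
        rw [hp, LaurentPolynomial.mul_T_assoc, add_neg_cancel, LaurentPolynomial.T_zero, mul_one]
      rw [hfval, hpC, map_mul, Polynomial.toLaurent_C, Polynomial.toLaurent_X_pow]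
      exact ((hlcu.map (LaurentPolynomial.C (R := S))).mul
        (LaurentPolynomial.isUnit_T _)).mul (LaurentPolynomial.isUnit_T _)
    · intro hu
      obtain ⟨u, rfl⟩ := hu
      have hg : ((u⁻¹ : (LaurentPolynomial S)ˣ) : LaurentPolynomial S) ≠ 0 := by
        intro h
        have : (1 : LaurentPolynomial S) = 0 := by
          rw [← u.mul_inv, h, mul_zero]
        exact one_ne_zero this
      have := hsuper _ _ hf hg
      rw [u.mul_inv, hone] at this
      omega
  · -- backward direction
    rintro ⟨ℓ, h1, h2⟩
    have hCne : ∀ s : S, s ≠ 0 → (LaurentPolynomial.C s : LaurentPolynomial S) ≠ 0 := by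
      intro s hs h
      rw [← LaurentPolynomial.single_eq_C] at h
      exact hs (AddMonoidAlgebra.single_eq_zero.mp h)
    refine ⟨fun s => ℓ (LaurentPolynomial.C s), fun a ha => ?_, fun a b ha hb => ?_⟩
    · rw [h1 _ (hCne a ha)]
      constructor
      · intro hu
        obtain ⟨u, hu⟩ := hu
        have hmul : LaurentPolynomial.C a * ((u⁻¹ : (LaurentPolynomial S)ˣ) : LaurentPolynomial S)
            = 1 := by rw [← hu, u.mul_inv]
        have := congrArg (fun f : LaurentPolynomial S => AddMonoidAlgebra.coeff f 0) hmul
        rw [← LaurentPolynomial.single_eq_C,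
          AddMonoidAlgebra.coeff_single_zero_mul] at this
        have h1val : AddMonoidAlgebra.coeff (1 : LaurentPolynomial S) 0 = 1 := by
          rw [AddMonoidAlgebra.one_def, AddMonoidAlgebra.coeff_single, Finsupp.single_eq_same]
        rw [h1val] at this
        exact IsUnit.of_mul_eq_one _ this
      · exact fun hu => hu.map (LaurentPolynomial.C (R := S))
    · show ℓ (LaurentPolynomial.C a) + ℓ (LaurentPolynomial.C b)
          ≤ ℓ (LaurentPolynomial.C (a * b))
      rw [map_mul]
      exact h2 _ _ (hCne a ha) (hCne b hb)
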